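/- Let θ_0 ∈ [0, π/2) and let {c_n}_{n∈ℤ} be a complex sequence such that c_n ∈ K(θ_0) and c_n + c_{−n} ∈ K(θ_0) for all n ≥ 1, where K(θ_0) = {z ∈ ℂ : |arg z| ≤ θ_0}. If the series ∑_{k=−∞}^∞ c_k e^{ikx} (in the sense of symmetric partial sums) converges pointwise on ℝ to a continuous 2π-periodic function f, then ∑_{n=1}^∞ |c_n + c_{−n}| < ∞. -/

import Mathlib

open Filter

lemma icc_sum_aux (g : ℤ → ℂ) (n : ℕ) :
    ∑ k ∈ Finset.Icc (-(n : ℤ)) (n : ℤ), g k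
      = g 0 + ∑ j ∈ Finset.range n, (g (j + 1) + g (-(j + 1 : ℤ))) := by
  induction n with
  | zero => simp
  | succ n ih =>
    have hset : Finset.Icc (-(n + 1 : ℤ)) (n + 1 : ℤ)
        = insert (-(n + 1 : ℤ)) (insert ((n : ℤ) + 1) (Finset.Icc (-(n : ℤ)) (n : ℤ))) := by
      ext k; simp only [Finset.mem_Icc, Finset.mem_insert]; omega
    have h1 : ((n : ℤ) + 1) ∉ Finset.Icc (-(n : ℤ)) (n : ℤ) := by
      simp only [Finset.mem_Icc]; omega
    have h2 : (-(n + 1 : ℤ)) ∉ insert ((n : ℤ) + 1) (Finset.Icc (-(n : ℤ)) (n : ℤ)) := by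
      simp only [Finset.mem_insert, Finset.mem_Icc]; omega
    rw [show ((n + 1 : ℕ) : ℤ) = (n : ℤ) + 1 by push_cast; ring, hset,
      Finset.sum_insert h2, Finset.sum_insert h1, ih, Finset.sum_range_succ]
    ring

lemma sector_re {θ₀ : ℝ} (hθ₁ : θ₀ < Real.pi / 2) {z : ℂ}
    (h : |Complex.arg z| ≤ θ₀) : ‖z‖ * Real.cos θ₀ ≤ z.re := by
  rcases eq_or_ne z 0 with rfl | hz
  · simp
  · have hπ : θ₀ ≤ Real.pi := by linarith [Real.pi_pos]
    have h1 : Real.cos θ₀ ≤ Real.cos |Complex.arg z| :=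
      Real.cos_le_cos_of_nonneg_of_le_pi (abs_nonneg _) hπ h
    have h2 : Real.cos (Complex.arg z) = z.re / ‖z‖ := Complex.cos_arg hz
    have h3 : 0 < ‖z‖ := norm_pos_iff.mpr hz
    have h4 : ‖z‖ * Real.cos θ₀ ≤ ‖z‖ * Real.cos (Complex.arg z) := by
      rw [← Real.cos_abs (Complex.arg z)]
      exact mul_le_mul_of_nonneg_left h1 h3.le
    calc ‖z‖ * Real.cos θ₀ ≤ ‖z‖ * Real.cos (Complex.arg z) := h4
      _ = z.re := by rw [h2]; field_simp

/-- The `n`-th symmetric partial sum `∑_{k=-n}^{n} c_k e^{ikx}` of a trigonometric series. -/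
noncomputable def symPartialSum (c : ℤ → ℂ) (n : ℕ) (x : ℝ) : ℂ :=
  ∑ k ∈ Finset.Icc (-(n : ℤ)) (n : ℤ), c k * Complex.exp ((k : ℂ) * x * Complex.I)

/-- (Xie–Zhou) Under the sector condition, pointwise convergence of the symmetric
partial sums to a continuous 2π-periodic function implies `∑ |cₙ + c₋ₙ| < ∞`. -/
theorem stmt12 (θ₀ : ℝ) (hθ₀ : 0 ≤ θ₀) (hθ₁ : θ₀ < Real.pi / 2)
    (c : ℤ → ℂ)
    (hsector : ∀ n : ℕ, 1 ≤ n →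
      |Complex.arg (c n)| ≤ θ₀ ∧ |Complex.arg (c n + c (-(n : ℤ)))| ≤ θ₀)
    (f : ℝ → ℂ) (hf : Continuous f) (hper : Function.Periodic f (2 * Real.pi))
    (hpt : ∀ x : ℝ, Tendsto (fun n : ℕ => symPartialSum c n x) atTop (nhds (f x))) :
    Summable fun n : ℕ => ‖c n + c (-(n : ℤ))‖ := by
  set b : ℕ → ℂ := fun n => c n + c (-(n : ℤ)) with hb
  set C := Real.cos θ₀ with hCdef
  have hC : 0 < C := Real.cos_pos_of_mem_Ioo ⟨by linarith [Real.pi_pos], hθ₁⟩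
  -- convergence of partial sums at x = 0
  have heq : ∀ n : ℕ, symPartialSum c n 0 = c 0 + ∑ j ∈ Finset.range n, b (j + 1) := by
    intro n
    unfold symPartialSum
    simp only [Complex.ofReal_zero, mul_zero, zero_mul, Complex.exp_zero, mul_one]
    rw [icc_sum_aux]
    congr 1
  have h0 := hpt 0
  rw [tendsto_congr heq] at h0
  have key : Tendsto (fun n : ℕ => ∑ j ∈ Finset.range n, b (j + 1)) atTop
      (nhds (f 0 - c 0)) := by
    have := h0.sub (tendsto_const_nhds (x := c 0) (f := atTop))
    simpa using this
  have keyRe : Tendsto (fun n : ℕ => ∑ j ∈ Finset.range n, (b (j + 1)).re) atTop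
      (nhds ((f 0 - c 0).re)) := by
    have := (Complex.continuous_re.tendsto _).comp key
    simpa [Function.comp_def, Complex.re_sum] using this
  have hsec : ∀ j : ℕ, ‖b (j + 1)‖ * C ≤ (b (j + 1)).re := by
    intro j
    exact sector_re hθ₁ (hsector (j + 1) (by omega)).2
  have hre_nonneg : ∀ j : ℕ, 0 ≤ (b (j + 1)).re := fun j =>
    le_trans (mul_nonneg (norm_nonneg _) hC.le) (hsec j)
  have hmono : Monotone fun n : ℕ => ∑ j ∈ Finset.range n, (b (j + 1)).re := by
    apply monotone_nat_of_le_succ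
    intro n
    rw [Finset.sum_range_succ]
    linarith [hre_nonneg n]
  have hbd : ∀ n : ℕ, ∑ j ∈ Finset.range n, (b (j + 1)).re ≤ (f 0 - c 0).re :=
    fun n => hmono.ge_of_tendsto keyRe n
  have hsumre : Summable fun j : ℕ => (b (j + 1)).re :=
    summable_of_sum_range_le hre_nonneg hbd
  have habs : Summable fun j : ℕ => ‖b (j + 1)‖ := by
    refine Summable.of_nonneg_of_le (fun j => norm_nonneg _) (fun j => ?_)
      (hsumre.div_const C)
    rw [le_div_iff₀ hC]
    exact hsec j
  exact (summable_nat_add_iff 1).mp habs
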